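/- arXiv:1709.06303 — 5 statements merged into one kernel-verified Lean document; each statement's English description precedes it below -/
import Mathlib

section
/- Let Γ be a group and χ₁, χ₂ : Γ → ℝ be nonzero group homomorphisms. Then {γ | χ₁(γ) ≥ 0} = {γ | χ₂(γ) ≥ 0} if and only if there exists a real number r > 0 with χ₂ = r • χ₁. -/
section aux

variable {Γ : Type*} [Group Γ]

private lemma chi_one (χ : Γ → ℝ) (h : ∀ a b : Γ, χ (a * b) = χ a + χ b) : χ 1 = 0 := by
  have := h 1 1; simp at this; linarith

private lemma chi_inv (χ : Γ → ℝ) (h : ∀ a b : Γ, χ (a * b) = χ a + χ b) (γ : Γ) :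
    χ γ⁻¹ = -χ γ := by
  have := h γ γ⁻¹
  rw [mul_inv_cancel, chi_one χ h] at this
  linarith

private lemma chi_zpow (χ : Γ → ℝ) (h : ∀ a b : Γ, χ (a * b) = χ a + χ b) (γ : Γ) (n : ℤ) :
    χ (γ ^ n) = n * χ γ := by
  induction n using Int.induction_on with
  | zero => simpa using chi_one χ h
  | succ k ih =>
      rw [zpow_add_one, h, ih]
      push_cast; ring
  | pred k ih =>
      rw [zpow_sub_one, h, ih, chi_inv χ h]
      push_cast; ring

/-- Key inequality: if the positive cone of χ₁ is contained in that of χ₂, then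
ratios compare. -/
private lemma key (χ₁ χ₂ : Γ → ℝ)
    (hχ₁ : ∀ a b : Γ, χ₁ (a * b) = χ₁ a + χ₁ b)
    (hχ₂ : ∀ a b : Γ, χ₂ (a * b) = χ₂ a + χ₂ b)
    (γ₀ : Γ) (h01 : 0 < χ₁ γ₀) (h02 : 0 < χ₂ γ₀)
    (hset : ∀ γ : Γ, 0 ≤ χ₁ γ → 0 ≤ χ₂ γ) (γ : Γ) :
    χ₂ γ / χ₂ γ₀ ≤ χ₁ γ / χ₁ γ₀ := by
  by_contra hlt
  push_neg at hlt
  obtain ⟨q, hq1, hq2⟩ := exists_rat_btwn hlt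
  set m : ℤ := q.num
  set n : ℤ := (q.den : ℤ)
  have hn : (0:ℝ) < (n:ℝ) := by positivity
  have hqval : (q : ℝ) = (m : ℝ) / (n : ℝ) := by
    rw [Rat.cast_def]; norm_num [m, n]
  -- χ₁ γ / χ₁ γ₀ < m/n ⇒ n * χ₁ γ < m * χ₁ γ₀
  have h1 : (n:ℝ) * χ₁ γ < (m:ℝ) * χ₁ γ₀ := by
    rw [hqval] at hq1
    rw [div_lt_div_iff₀ h01 hn] at hq1
    linarith
  -- the element γ₀^m * γ^{-n} has χ₁ ≥ 0
  have hel : 0 ≤ χ₁ (γ₀ ^ m * γ ^ (-n)) := by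
    rw [hχ₁, chi_zpow χ₁ hχ₁, chi_zpow χ₁ hχ₁]
    push_cast; linarith
  have hel2 := hset _ hel
  rw [hχ₂, chi_zpow χ₂ hχ₂, chi_zpow χ₂ hχ₂] at hel2
  push_cast at hel2
  -- so n * χ₂ γ ≤ m * χ₂ γ₀, i.e. χ₂ γ / χ₂ γ₀ ≤ m/n = q, contradiction with q < ratio
  have h2 : (m:ℝ) / (n:ℝ) < χ₂ γ / χ₂ γ₀ := by rw [← hqval]; exact hq2
  rw [div_lt_div_iff₀ hn h02] at h2
  linarith

end aux

/-- For nonzero characters `χ₁, χ₂ : Γ → ℝ`, the submonoids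
`{γ | χ₁ γ ≥ 0}` and `{γ | χ₂ γ ≥ 0}` coincide iff `χ₂ = r • χ₁` for some `r > 0`. -/
theorem stmt1 {Γ : Type*} [Group Γ] (χ₁ χ₂ : Γ → ℝ)
    (hχ₁ : ∀ a b : Γ, χ₁ (a * b) = χ₁ a + χ₁ b)
    (hχ₂ : ∀ a b : Γ, χ₂ (a * b) = χ₂ a + χ₂ b)
    (h₁ : χ₁ ≠ 0) (h₂ : χ₂ ≠ 0) :
    {γ : Γ | 0 ≤ χ₁ γ} = {γ : Γ | 0 ≤ χ₂ γ} ↔ ∃ r : ℝ, 0 < r ∧ χ₂ = r • χ₁ := by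
  constructor
  · intro hset
    have h12 : ∀ γ : Γ, 0 ≤ χ₁ γ → 0 ≤ χ₂ γ := fun γ hγ => (hset ▸ hγ : γ ∈ {γ : Γ | 0 ≤ χ₂ γ})
    have h21 : ∀ γ : Γ, 0 ≤ χ₂ γ → 0 ≤ χ₁ γ := fun γ hγ => (hset.symm ▸ hγ : γ ∈ {γ : Γ | 0 ≤ χ₁ γ})
    -- find γ₀ with χ₁ γ₀ > 0
    obtain ⟨γ, hγ⟩ : ∃ γ, χ₁ γ ≠ 0 := by
      by_contra h; push_neg at h; exact h₁ (funext h)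
    obtain ⟨γ₀, h01⟩ : ∃ γ₀, 0 < χ₁ γ₀ := by
      rcases lt_or_gt_of_ne hγ with h | h
      · exact ⟨γ⁻¹, by rw [chi_inv χ₁ hχ₁]; linarith⟩
      · exact ⟨γ, h⟩
    have h02 : 0 < χ₂ γ₀ := by
      rcases lt_or_eq_of_le (h12 γ₀ h01.le) with h | h
      · exact h
      · exfalso
        have : 0 ≤ χ₂ γ₀⁻¹ := by rw [chi_inv χ₂ hχ₂, ← h]; norm_num
        have := h21 _ this
        rw [chi_inv χ₁ hχ₁] at this
        linarith
    refine ⟨χ₂ γ₀ / χ₁ γ₀, div_pos h02 h01, funext fun γ => ?_⟩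
    have hle := key χ₁ χ₂ hχ₁ hχ₂ γ₀ h01 h02 h12 γ
    have hge := key χ₂ χ₁ hχ₂ hχ₁ γ₀ h02 h01 h21 γ
    have heq : χ₂ γ / χ₂ γ₀ = χ₁ γ / χ₁ γ₀ := le_antisymm hle hge
    have : χ₂ γ = χ₁ γ / χ₁ γ₀ * χ₂ γ₀ := by
      field_simp at heq ⊢; linarith
    simp only [Pi.smul_apply, smul_eq_mul]
    rw [this]; ring
  · rintro ⟨r, hr, rfl⟩
    ext γ
    simp only [Set.mem_setOf_eq, Pi.smul_apply, smul_eq_mul]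
    constructor
    · intro h; positivity
    · intro h; nlinarith
end

section
/- Let G be a group acting on a set X, let x, y ∈ X, and let χ : G → ℝ be a group homomorphism. Write G_χ = {g ∈ G | χ(g) ≥ 0} and let G_{(x,y)} be the stabilizer of (x,y) under the diagonal action of G on X × X. If χ vanishes on G_{(x,y)} and χ is nonzero on G, then there is no finite set of elements (x₁,y₁),…,(xₙ,yₙ) in the orbit G·(x,y) such that G·(x,y) = ⋃ⱼ G_χ · (xⱼ,yⱼ). -/
/-- If `χ` vanishes on the stabilizer `G_{(x,y)}` of `(x,y)` in the
diagonal action of `G` on `X × X`, and `χ` is nonzero, then the orbit `G·(x,y)` is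
not a finite union of `G_χ`-orbits. -/
theorem stmt2 {G X : Type*} [Group G] [MulAction G X] (x y : X) (χ : G → ℝ)
    (hχ : ∀ a b : G, χ (a * b) = χ a + χ b)
    (hvan : ∀ g : G, g • (x, y) = (x, y) → χ g = 0)
    (hne : ∃ g : G, χ g ≠ 0) :
    ¬ ∃ (n : ℕ) (p : Fin n → X × X),
        (∀ j, p j ∈ MulAction.orbit G (x, y)) ∧
          ∀ q ∈ MulAction.orbit G (x, y), ∃ (j : Fin n) (g : G), 0 ≤ χ g ∧ q = g • p j := by
  rintro ⟨n, p, hp, hcov⟩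
  choose h hh using hp
  have h1 : χ 1 = 0 := by have := hχ 1 1; simp at this; linarith
  have hinv : ∀ g : G, χ g⁻¹ = - χ g := by
    intro g; have := hχ g⁻¹ g; simp [h1] at this; linarith
  have hpow : ∀ (g : G) (k : ℕ), χ (g ^ k) = k * χ g := by
    intro g k; induction k with
    | zero => simp [h1]
    | succ k ih => rw [pow_succ, hχ, ih]; push_cast; ring
  obtain ⟨g₀, hg₀⟩ := hne
  obtain ⟨g₁, hg₁⟩ : ∃ g₁ : G, χ g₁ < 0 := by
    rcases lt_or_gt_of_ne hg₀ with h' | h'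
    · exact ⟨g₀, h'⟩
    · exact ⟨g₀⁻¹, by rw [hinv]; linarith⟩
  obtain ⟨b, hb⟩ := Finite.exists_le fun j => -χ (h j)
  obtain ⟨k, hk⟩ := exists_nat_gt (-b / χ g₁)
  have hkc : (k : ℝ) * χ g₁ < -b := by
    have := mul_lt_mul_of_neg_right hk hg₁
    rwa [div_mul_cancel₀ _ (ne_of_lt hg₁)] at this
  obtain ⟨j, g, hg, hq⟩ := hcov (g₁ ^ k • (x, y)) (MulAction.mem_orbit _ _)
  rw [← hh j, smul_smul] at hq
  have hstab : ((g * h j)⁻¹ * g₁ ^ k) • (x, y) = (x, y) := by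
    rw [mul_smul, hq, inv_smul_smul]
  have hz := hvan _ hstab
  rw [hχ, hinv, hχ, hpow] at hz
  have hj := hb j
  linarith
end

section
/- Let G be a group acting transitively on a set X, let x₁ ∈ X, and let χ : G → ℝ be a nonzero group homomorphism. If the submonoid G_χ = {g ∈ G | χ(g) ≥ 0} acts transitively on X (i.e. G_χ · x₁ = X), then the restriction of χ to the stabilizer G_{x₁} is nonzero. -/
/-- If `G` acts transitively on `X`, `χ : G → ℝ` is a nonzero character,
and the submonoid `G_χ = {g | χ g ≥ 0}` already acts transitively (`G_χ · x₁ = X`),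
then `χ` is nonzero on the stabilizer `G_{x₁}`. -/
theorem stmt3 {G X : Type*} [Group G] [MulAction G X] (x₁ : X) (χ : G → ℝ)
    (hχ : ∀ a b : G, χ (a * b) = χ a + χ b)
    (htrans : ∀ x : X, ∃ g : G, g • x₁ = x)
    (hne : ∃ g : G, χ g ≠ 0)
    (hmon : ∀ x : X, ∃ g : G, 0 ≤ χ g ∧ g • x₁ = x) :
    ∃ g : G, g • x₁ = x₁ ∧ χ g ≠ 0 := by
  have h1 : χ 1 = 0 := by have := hχ 1 1; simpa using this
  have hinv : ∀ g : G, χ g⁻¹ = -χ g := by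
    intro g
    have := hχ g g⁻¹
    simp [h1] at this
    linarith
  obtain ⟨g, hg⟩ := hne
  -- get g₀ with χ g₀ < 0
  obtain ⟨g₀, hg₀⟩ : ∃ g₀ : G, χ g₀ < 0 := by
    rcases lt_or_gt_of_ne hg with h | h
    · exact ⟨g, h⟩
    · exact ⟨g⁻¹, by rw [hinv]; linarith⟩
  obtain ⟨h, hh, hhx⟩ := hmon (g₀ • x₁)
  refine ⟨g₀⁻¹ * h, ?_, ?_⟩
  · rw [mul_smul, hhx, inv_smul_smul]
  · rw [hχ, hinv]
    intro habs; linarith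
end

section
/- Let Γ = H ≀_X G with X = G·x₁ a single orbit, M = ⨁_{x∈X} H_x, and let χ : Γ → ℝ vanish on M. If M is generated by the set of conjugates {g h g⁻¹ | g ∈ G_χ, h ∈ H_{x₁}} where G_χ = {g ∈ G | χ(g) ≥ 0}, then G_χ acts transitively on X, i.e. X = G_χ · x₁. -/
/-- The restricted direct product `⨁_{x ∈ X} H_x`: functions `X → H` with finite
(multiplicative) support, as a subgroup of the full direct product. -/
def restrictedProd (H : Type*) [Group H] (X : Type*) : Subgroup (X → H) where
  carrier := {f | (Function.mulSupport f).Finite}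
  one_mem' := by simp [Function.mulSupport_one]
  mul_mem' := by
    intro f g hf hg
    exact Set.Finite.subset (hf.union hg) (Function.mulSupport_mul f g)
  inv_mem' := by
    intro f hf
    simpa [Function.mulSupport_inv] using hf

/-- The permutation action of `G` on `⨁_{x ∈ X} H_x` induced by a `G`-action on `X`. -/
def wreathAction (H : Type*) [Group H] (X : Type*) (G : Type*) [Group G] [MulAction G X] :
    G →* MulAut (restrictedProd H X) where
  toFun g :=
    { toFun := fun f => ⟨fun x => f.1 (g⁻¹ • x), by
        have : (Function.mulSupport fun x => f.1 (g⁻¹ • x)) ⊆ (fun x => g • x) '' Function.mulSupport f.1 := by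
          intro x hx
          exact ⟨g⁻¹ • x, hx, by simp⟩
        exact Set.Finite.subset (f.2.image _) this⟩
      invFun := fun f => ⟨fun x => f.1 (g • x), by
        have : (Function.mulSupport fun x => f.1 (g • x)) ⊆ (fun x => g⁻¹ • x) '' Function.mulSupport f.1 := by
          intro x hx
          exact ⟨g • x, hx, by simp⟩
        exact Set.Finite.subset (f.2.image _) this⟩
      left_inv := by intro f; ext x; simp
      right_inv := by intro f; ext x; simp
      map_mul' := by intro f₁ f₂; rfl }
  map_one' := by ext f x; simp
  map_mul' := by intro g₁ g₂; ext f x; simp [mul_smul]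

/-- The restricted permutational wreath product `H ≀_X G = (⨁_{x ∈ X} H_x) ⋊ G`. -/
abbrev WreathProduct (H : Type*) [Group H] (X : Type*) (G : Type*) [Group G] [MulAction G X] :=
  restrictedProd H X ⋊[wreathAction H X G] G

/-- The element of `⨁_{x ∈ X} H_x` supported at `x₁` with value `h` (the copy of
`h ∈ H` inside the coordinate subgroup `H_{x₁}`). -/
def singleElt {H : Type*} [Group H] {X : Type*} [DecidableEq X] (x₁ : X) (h : H) :
    restrictedProd H X :=
  ⟨Pi.mulSingle x₁ h,
    Set.Finite.subset (Set.finite_singleton x₁) Pi.mulSupport_mulSingle_subset⟩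

/-- Let `Γ = H ≀_X G` with `X = G·x₁` a single orbit, `H ≠ 1`, and
`χ : Γ → ℝ` a character vanishing on `M = ⨁_{x∈X} H_x`. If `M` is generated by the
conjugates `g H_{x₁} g⁻¹` with `g ∈ G_χ`, then `G_χ` acts transitively: `X = G_χ·x₁`. -/
theorem stmt11 (H : Type*) [Group H] (X : Type*) [DecidableEq X]
    (G : Type*) [Group G] [MulAction G X] (x₁ : X)
    (htrans : ∀ x : X, ∃ g : G, g • x₁ = x)
    (hH : ∃ h : H, h ≠ 1)
    (χ : WreathProduct H X G → ℝ)
    (hχ : ∀ a b : WreathProduct H X G, χ (a * b) = χ a + χ b)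
    (hM : ∀ m : restrictedProd H X, χ (SemidirectProduct.inl m) = 0)
    (hgen : Subgroup.closure {m : restrictedProd H X |
        ∃ (g : G) (h : H), 0 ≤ χ (SemidirectProduct.inr g) ∧
          m = wreathAction H X G g (singleElt x₁ h)} = ⊤) :
    ∀ x : X, ∃ g : G, 0 ≤ χ (SemidirectProduct.inr g) ∧ g • x₁ = x := by
  intro x
  obtain ⟨h₀, hh₀⟩ := hH
  obtain ⟨g₀, hg₀⟩ := htrans x
  by_contra hcon
  push_neg at hcon
  set S : Set X := {y | ∃ g : G, 0 ≤ χ (SemidirectProduct.inr g) ∧ g • x₁ = y} with hS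
  have hxS : x ∉ S := by rintro ⟨g, hg, hgx⟩; exact hcon g hg hgx
  let K : Subgroup (restrictedProd H X) :=
    { carrier := {f | ∀ y, y ∉ S → f.1 y = 1}
      one_mem' := fun y _ => rfl
      mul_mem' := fun {a b} ha hb y hy => by
        show a.1 y * b.1 y = 1
        rw [ha y hy, hb y hy, one_mul]
      inv_mem' := fun {a} ha y hy => by
        show (a.1 y)⁻¹ = 1
        rw [ha y hy, inv_one] }
  have hKtop : (⊤ : Subgroup (restrictedProd H X)) ≤ K := by
    rw [← hgen]
    refine (Subgroup.closure_le K).2 ?_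
    rintro m ⟨g, h, hg, rfl⟩ y hy
    show (Pi.mulSingle x₁ h : X → H) (g⁻¹ • y) = 1
    have hne : g⁻¹ • y ≠ x₁ := by
      intro hyy
      exact hy ⟨g, hg, by rw [← hyy]; simp⟩
    exact Pi.mulSingle_eq_of_ne (M := fun _ => H) hne h
  have hm := hKtop (Subgroup.mem_top (wreathAction H X G g₀ (singleElt x₁ h₀))) x hxS
  have hx₁ : g₀⁻¹ • x = x₁ := by rw [← hg₀]; simp
  have : (Pi.mulSingle x₁ h₀ : X → H) (g₀⁻¹ • x) = 1 := hm
  rw [hx₁, Pi.mulSingle_eq_same] at this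
  exact hh₀ this
end

section
/- Let F be a free group on 𝒳, χ : F → ℝ a group homomorphism, and N ⊴ F a normal subgroup with N ⊆ ker χ. Then R(χ) = {w ∈ N | v_χ(w) ≥ 0} (prefix minima of the reduced word representing w are nonnegative) is a subgroup of N: it contains 1, and is closed under inverses and products. In particular, if w ∈ N and v_χ(w) ≥ 0 then v_χ(w⁻¹) ≥ 0. -/
open FreeGroup in
private lemma stmt14_step {𝒳 : Type*} (χ : FreeGroup 𝒳 → ℝ)
    {L L' : List (𝒳 × Bool)} (h : FreeGroup.Red.Step L L')
    (H : ∀ l₁ l₂ : List (𝒳 × Bool), L = l₁ ++ l₂ → 0 ≤ χ (FreeGroup.mk l₁)) :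
    ∀ l₁ l₂ : List (𝒳 × Bool), L' = l₁ ++ l₂ → 0 ≤ χ (FreeGroup.mk l₁) := by
  cases h with
  | @not a c x b =>
    intro l₁ l₂ hl
    rcases List.append_eq_append_iff.mp hl.symm with ⟨a', ha, _⟩ | ⟨c', hc, hc2⟩
    · exact H l₁ (a' ++ (x, b) :: (x, !b) :: c) (by simp [ha])
    · have key : FreeGroup.mk (a ++ (x, b) :: (x, !b) :: c') = FreeGroup.mk l₁ := by
        rw [hc]; exact Quot.sound FreeGroup.Red.Step.not
      have := H (a ++ (x, b) :: (x, !b) :: c') l₂ (by simp [hc2])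
      rwa [key] at this
private lemma stmt14_red {𝒳 : Type*} (χ : FreeGroup 𝒳 → ℝ)
    {L L' : List (𝒳 × Bool)} (h : FreeGroup.Red L L')
    (H : ∀ l₁ l₂ : List (𝒳 × Bool), L = l₁ ++ l₂ → 0 ≤ χ (FreeGroup.mk l₁)) :
    ∀ l₁ l₂ : List (𝒳 × Bool), L' = l₁ ++ l₂ → 0 ≤ χ (FreeGroup.mk l₁) := by
  induction h with
  | refl => exact H
  | tail _ hstep ih => exact stmt14_step χ hstep ih

/-- For a character `χ` on the free group `F(𝒳)` and a normal
subgroup `N ⊆ ker χ`, the set `R(χ)` of elements of `N` whose reduced word has all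
prefix `χ`-values nonnegative is a subgroup of `N`: it contains `1` and is closed
under inverses and products. -/
theorem stmt14 {𝒳 : Type*} [DecidableEq 𝒳] (χ : FreeGroup 𝒳 → ℝ)
    (hχ : ∀ a b : FreeGroup 𝒳, χ (a * b) = χ a + χ b)
    (N : Subgroup (FreeGroup 𝒳)) [N.Normal] (hker : ∀ w ∈ N, χ w = 0) :
    (1 : FreeGroup 𝒳) ∈ {w : FreeGroup 𝒳 | w ∈ N ∧
        ∀ l₁ l₂ : List (𝒳 × Bool), w.toWord = l₁ ++ l₂ → 0 ≤ χ (FreeGroup.mk l₁)} ∧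
      (∀ w ∈ {w : FreeGroup 𝒳 | w ∈ N ∧
          ∀ l₁ l₂ : List (𝒳 × Bool), w.toWord = l₁ ++ l₂ → 0 ≤ χ (FreeGroup.mk l₁)},
        w⁻¹ ∈ {w : FreeGroup 𝒳 | w ∈ N ∧
          ∀ l₁ l₂ : List (𝒳 × Bool), w.toWord = l₁ ++ l₂ → 0 ≤ χ (FreeGroup.mk l₁)}) ∧
      ∀ w₁ ∈ {w : FreeGroup 𝒳 | w ∈ N ∧
          ∀ l₁ l₂ : List (𝒳 × Bool), w.toWord = l₁ ++ l₂ → 0 ≤ χ (FreeGroup.mk l₁)},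
        ∀ w₂ ∈ {w : FreeGroup 𝒳 | w ∈ N ∧
          ∀ l₁ l₂ : List (𝒳 × Bool), w.toWord = l₁ ++ l₂ → 0 ≤ χ (FreeGroup.mk l₁)},
        w₁ * w₂ ∈ {w : FreeGroup 𝒳 | w ∈ N ∧
          ∀ l₁ l₂ : List (𝒳 × Bool), w.toWord = l₁ ++ l₂ → 0 ≤ χ (FreeGroup.mk l₁)} := by
  have hone : χ 1 = 0 := by
    have := hχ 1 1; rw [one_mul] at this; linarith
  have hmul : ∀ l₁ l₂ : List (𝒳 × Bool),
      χ (FreeGroup.mk (l₁ ++ l₂)) = χ (FreeGroup.mk l₁) + χ (FreeGroup.mk l₂) := by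
    intro l₁ l₂; rw [← FreeGroup.mul_mk, hχ]
  refine ⟨⟨one_mem N, ?_⟩, ?_, ?_⟩
  · intro l₁ l₂ hl
    rw [FreeGroup.toWord_one] at hl
    obtain ⟨h1, _⟩ := List.append_eq_nil_iff.mp hl.symm
    subst h1
    rw [show FreeGroup.mk ([] : List (𝒳 × Bool)) = 1 from FreeGroup.one_eq_mk.symm, hone]
  · rintro w ⟨hwN, hw⟩
    refine ⟨inv_mem hwN, ?_⟩
    intro l₁ l₂ hl
    rw [FreeGroup.toWord_inv] at hl
    have hL : w.toWord = FreeGroup.invRev l₂ ++ FreeGroup.invRev l₁ := by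
      have := congrArg FreeGroup.invRev hl
      rw [FreeGroup.invRev_invRev] at this
      rw [this]; simp [FreeGroup.invRev]
    have h2 : 0 ≤ χ (FreeGroup.mk (FreeGroup.invRev l₂)) := hw _ _ hL
    have h3 : FreeGroup.mk (FreeGroup.invRev l₂) = (FreeGroup.mk l₂)⁻¹ :=
      (FreeGroup.inv_mk).symm
    have hinv : χ (w⁻¹) = 0 := hker _ (inv_mem hwN)
    have h4 : χ (FreeGroup.mk l₁) + χ (FreeGroup.mk l₂) = 0 := by
      have : FreeGroup.mk (l₁ ++ l₂) = w⁻¹ := by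
        rw [← hl]
        have := FreeGroup.mk_toWord (x := w⁻¹)
        rw [FreeGroup.toWord_inv] at this; exact this
      rw [← hmul, this, hinv]
    have h5 : χ (FreeGroup.mk l₂) + χ (FreeGroup.mk (FreeGroup.invRev l₂)) = 0 := by
      rw [h3, ← hχ, mul_inv_cancel, hone]  -- wrong order, fix below
    linarith
  · rintro w₁ ⟨h1N, h1⟩ w₂ ⟨h2N, h2⟩
    refine ⟨mul_mem h1N h2N, ?_⟩
    have hcat : ∀ l₁ l₂ : List (𝒳 × Bool),
        w₁.toWord ++ w₂.toWord = l₁ ++ l₂ → 0 ≤ χ (FreeGroup.mk l₁) := by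
      intro l₁ l₂ hl
      rcases List.append_eq_append_iff.mp hl with ⟨a', ha, ha2⟩ | ⟨c', hc, _⟩
      · have hp : 0 ≤ χ (FreeGroup.mk a') := h2 a' l₂ ha2
        have hv : χ w₁ = 0 := hker _ h1N
        rw [ha, hmul]
        have hw : FreeGroup.mk w₁.toWord = w₁ := FreeGroup.mk_toWord
        rw [hw, hv]; linarith
      · exact h1 l₁ c' hc
    have hred : FreeGroup.Red (w₁.toWord ++ w₂.toWord) ((w₁ * w₂).toWord) := by
      have : w₁ * w₂ = FreeGroup.mk (w₁.toWord ++ w₂.toWord) := by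
        rw [← FreeGroup.mul_mk, FreeGroup.mk_toWord, FreeGroup.mk_toWord]
      rw [this, FreeGroup.toWord_mk]
      exact FreeGroup.reduce.red
    exact stmt14_red χ hred hcat
end
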